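/- For all integers n, m with n > m > 2, the groups G and H are not isomorphic. -/

import Mathlib

namespace MIP

/-- Relators of the group `G`. -/
def grels (n m : ℕ) : Set (FreeGroup (Fin 3)) :=
  {(FreeGroup.of 2)⁻¹ * ((FreeGroup.of 1)⁻¹ * (FreeGroup.of 0)⁻¹ * FreeGroup.of 1 * FreeGroup.of 0),
   FreeGroup.of 0 ^ (2 ^ n), FreeGroup.of 1 ^ (2 ^ m), FreeGroup.of 2 ^ 4,
   (FreeGroup.of 0)⁻¹ * FreeGroup.of 2 * FreeGroup.of 0 * FreeGroup.of 2,
   (FreeGroup.of 1)⁻¹ * FreeGroup.of 2 * FreeGroup.of 1 * FreeGroup.of 2}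

/-- Relators of the group `H`. -/
def hrels (n m : ℕ) : Set (FreeGroup (Fin 3)) :=
  {(FreeGroup.of 2)⁻¹ * ((FreeGroup.of 1)⁻¹ * (FreeGroup.of 0)⁻¹ * FreeGroup.of 1 * FreeGroup.of 0),
   FreeGroup.of 0 ^ (2 ^ n), FreeGroup.of 1 ^ (2 ^ m), FreeGroup.of 2 ^ 4,
   (FreeGroup.of 0)⁻¹ * FreeGroup.of 2 * FreeGroup.of 0 * FreeGroup.of 2,
   (FreeGroup.of 1)⁻¹ * FreeGroup.of 2 * FreeGroup.of 1 * (FreeGroup.of 2)⁻¹}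

abbrev GG (n m : ℕ) := PresentedGroup (grels n m)
abbrev HH (n m : ℕ) := PresentedGroup (hrels n m)

def gx (n m : ℕ) : GG n m := PresentedGroup.of 0
def gy (n m : ℕ) : GG n m := PresentedGroup.of 1
def gz (n m : ℕ) : GG n m := PresentedGroup.of 2
def ha (n m : ℕ) : HH n m := PresentedGroup.of 0
def hb (n m : ℕ) : HH n m := PresentedGroup.of 1
def hc (n m : ℕ) : HH n m := PresentedGroup.of 2

/-! ### The Heisenberg group over `ZMod 2` -/

@[ext]
structure Heis where
  a : ZMod 2
  b : ZMod 2
  c : ZMod 2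
deriving DecidableEq, Fintype

namespace Heis

instance : Mul Heis := ⟨fun g h => ⟨g.a + h.a, g.b + h.b, g.b * h.a + g.c + h.c⟩⟩
instance : One Heis := ⟨⟨0, 0, 0⟩⟩
instance : Inv Heis := ⟨fun g => ⟨-g.a, -g.b, g.b * g.a - g.c⟩⟩

@[simp] lemma mul_a (g h : Heis) : (g * h).a = g.a + h.a := rfl
@[simp] lemma mul_b (g h : Heis) : (g * h).b = g.b + h.b := rfl
@[simp] lemma mul_c (g h : Heis) : (g * h).c = g.b * h.a + g.c + h.c := rfl
@[simp] lemma one_a : (1 : Heis).a = 0 := rfl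
@[simp] lemma one_b : (1 : Heis).b = 0 := rfl
@[simp] lemma one_c : (1 : Heis).c = 0 := rfl

instance : Group Heis where
  mul_assoc := by decide
  one_mul := by decide
  mul_one := by decide
  inv_mul_cancel := by decide

end Heis

/-! ### The model of `H` -/

lemma two_dvd_four_mul (N : ℕ) : (2 : ℕ) ∣ 4 * N := ⟨2 * N, by ring⟩
lemma four_dvd_four_mul (N : ℕ) : (4 : ℕ) ∣ 4 * N := ⟨N, rfl⟩

def par (N : ℕ) : ZMod (4 * N) →+* ZMod 2 := ZMod.castHom (two_dvd_four_mul N) _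
def cfour (M : ℕ) : ZMod (4 * M) →+* ZMod 4 := ZMod.castHom (four_dvd_four_mul M) _
def ctwo : ZMod 4 →+* ZMod 2 := ZMod.castHom (by norm_num : (2:ℕ) ∣ 4) (ZMod 2)

/-- twist -/
def tw (t : ZMod 2) (J K : ZMod 4) : ZMod 4 := if t = 1 then J - K else K

@[simp] lemma tw0 (J K : ZMod 4) : tw 0 J K = K := by simp [tw]
@[simp] lemma tw1 (J K : ZMod 4) : tw 1 J K = J - K := by simp [tw]
@[simp] lemma tw_zero (t : ZMod 2) : tw t 0 0 = 0 := by rcases t with _|_ <;> simp [tw]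

lemma zmod2_cases : ∀ t : ZMod 2, t = 0 ∨ t = 1 := by decide

@[ext]
structure Mdl (N M : ℕ) where
  a : ZMod (4 * N)
  b : ZMod (4 * M)
  c : ZMod 4

namespace Mdl

variable {N M : ℕ}

instance : Mul (Mdl N M) :=
  ⟨fun g h => ⟨g.a + h.a, g.b + h.b, tw (par N h.a) (cfour M g.b) g.c + h.c⟩⟩
instance : One (Mdl N M) := ⟨⟨0, 0, 0⟩⟩
instance : Inv (Mdl N M) :=
  ⟨fun g => ⟨-g.a, -g.b, if par N g.a = 1 then g.c - cfour M g.b else -g.c⟩⟩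

@[simp] lemma mul_a (g h : Mdl N M) : (g * h).a = g.a + h.a := rfl
@[simp] lemma mul_b (g h : Mdl N M) : (g * h).b = g.b + h.b := rfl
lemma mul_c (g h : Mdl N M) :
    (g * h).c = tw (par N h.a) (cfour M g.b) g.c + h.c := rfl
@[simp] lemma one_a : (1 : Mdl N M).a = 0 := rfl
@[simp] lemma one_b : (1 : Mdl N M).b = 0 := rfl
@[simp] lemma one_c : (1 : Mdl N M).c = 0 := rfl
@[simp] lemma inv_a (g : Mdl N M) : (g⁻¹).a = -g.a := rfl
@[simp] lemma inv_b (g : Mdl N M) : (g⁻¹).b = -g.b := rfl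
lemma inv_c (g : Mdl N M) :
    (g⁻¹).c = if par N g.a = 1 then g.c - cfour M g.b else -g.c := rfl

instance : Group (Mdl N M) where
  mul_assoc g h k := by
    ext
    · simp [add_assoc]
    · simp [add_assoc]
    · simp only [mul_c, mul_a, mul_b, map_add]
      rcases zmod2_cases (par N h.a) with h1 | h1 <;>
        rcases zmod2_cases (par N k.a) with h2 | h2 <;>
          simp [h1, h2, tw] <;> ring
  one_mul g := by
    ext <;> simp [mul_c]
  mul_one g := by
    ext <;> simp [mul_c, map_zero]
  inv_mul_cancel g := by
    ext
    · simp
    · simp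
    · simp only [mul_c, inv_a, inv_b, inv_c, map_neg, one_c]
      rcases zmod2_cases (par N g.a) with h1 | h1 <;> simp [h1, tw] <;> ring

def X : Mdl N M := ⟨1, 0, 0⟩
def Y : Mdl N M := ⟨0, 1, 0⟩
def Z : Mdl N M := ⟨0, 0, 1⟩

lemma X_pow (t : ℕ) : (X : Mdl N M) ^ t = ⟨(t : ZMod (4 * N)), 0, 0⟩ := by
  induction t with
  | zero => simp; rfl
  | succ t ih => rw [pow_succ, ih]; ext <;> simp [X, mul_c]
lemma Y_pow (t : ℕ) : (Y : Mdl N M) ^ t = ⟨0, (t : ZMod (4 * M)), 0⟩ := by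
  induction t with
  | zero => simp; rfl
  | succ t ih => rw [pow_succ, ih]; ext <;> simp [Y, mul_c, map_zero]
lemma Z_pow (t : ℕ) : (Z : Mdl N M) ^ t = ⟨0, 0, (t : ZMod 4)⟩ := by
  induction t with
  | zero => simp; rfl
  | succ t ih => rw [pow_succ, ih]; ext <;> simp [Z, mul_c, map_zero]

lemma pow_fst (g : Mdl N M) (t : ℕ) : (g ^ t).a = (t : ZMod (4 * N)) * g.a := by
  induction t with
  | zero => simp
  | succ t ih => rw [pow_succ]; simp [ih]; ring

lemma decomp [NeZero (4 * N)] [NeZero (4 * M)] (g : Mdl N M) :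
    g = X ^ g.a.val * Y ^ g.b.val * Z ^ g.c.val := by
  rw [X_pow, Y_pow, Z_pow]
  ext <;> simp [mul_c, map_zero, ZMod.natCast_val, ZMod.cast_id]

/-- the reduction to the Heisenberg group -/
def nu (N M : ℕ) : Mdl N M →* Heis where
  toFun g := ⟨par N g.a, ZMod.castHom (two_dvd_four_mul M) (ZMod 2) g.b, ctwo g.c⟩
  map_one' := by
    ext <;> simp
  map_mul' g h := by
    have hcomp : ∀ x : ZMod (4 * M),
        ctwo (cfour M x) = ZMod.castHom (two_dvd_four_mul M) (ZMod 2) x := fun x => by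
      show (ctwo.comp (cfour M)) x = _
      simp only [ctwo, cfour]
      rw [ZMod.castHom_comp]
    ext
    · simp only [Heis.mul_a, mul_a, map_add]
    · simp only [Heis.mul_b, mul_b, map_add]
    · show ctwo ((g * h).c) = _
      rw [mul_c, map_add]
      show _ = _ * par N h.a + ctwo g.c + ctwo h.c
      rcases zmod2_cases (par N h.a) with h1 | h1 <;>
          simp only [h1, tw0, tw1, map_sub, mul_zero, mul_one, hcomp]
      · ring
      · have h2 : ∀ u v w : ZMod 2, (u - v) + w = u + v + w := by decide
        exact h2 _ _ _
lemma Xinv : (X : Mdl N M)⁻¹ = ⟨-1, 0, 0⟩ := by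
  ext <;> simp [X, inv_c, map_one, map_zero]
lemma Yinv : (Y : Mdl N M)⁻¹ = ⟨0, -1, 0⟩ := by
  ext <;> simp [Y, inv_c, map_zero]
lemma Zinv : (Z : Mdl N M)⁻¹ = ⟨0, 0, -1⟩ := by
  ext <;> simp [Z, inv_c, map_zero]

@[simp] lemma par_one : par N (1 : ZMod (4 * N)) = 1 := map_one _
@[simp] lemma par_zero : par N (0 : ZMod (4 * N)) = 0 := map_zero _
@[simp] lemma par_neg_one : par N (-1 : ZMod (4 * N)) = 1 := by
  rw [map_neg, map_one]; decide

lemma nu_surjective (N M : ℕ) : Function.Surjective (nu N M) := by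
  rintro ⟨α, β, γ⟩
  refine ⟨⟨((α.val : ℕ) : ZMod (4 * N)), ((β.val : ℕ) : ZMod (4 * M)), ((γ.val : ℕ) : ZMod 4)⟩, ?_⟩
  ext
  · show par N _ = α
    rw [map_natCast, ZMod.natCast_val, ZMod.cast_id]
  · show ZMod.castHom _ _ _ = β
    rw [map_natCast, ZMod.natCast_val, ZMod.cast_id]
  · show ctwo _ = γ
    rw [map_natCast, ZMod.natCast_val, ZMod.cast_id]

end Mdl

/-! ### the homomorphism `HH n m →* Mdl N M` -/

def fgen (N M : ℕ) : Fin 3 → Mdl N M := fun i =>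
  if i = 0 then Mdl.X else if i = 1 then Mdl.Y else Mdl.Z

@[simp] lemma fgen0 (N M : ℕ) : fgen N M 0 = Mdl.X := rfl
@[simp] lemma fgen1 (N M : ℕ) : fgen N M 1 = Mdl.Y := rfl
@[simp] lemma fgen2 (N M : ℕ) : fgen N M 2 = Mdl.Z := rfl

lemma hrels_check (n m N M : ℕ) (h4N : 4 * N = 2 ^ n) (h4M : 4 * M = 2 ^ m) :
    ∀ r ∈ hrels n m, FreeGroup.lift (fgen N M) r = 1 := by
  have hYXYX : (Mdl.Y : Mdl N M)⁻¹ * Mdl.X⁻¹ * Mdl.Y * Mdl.X = Mdl.Z := by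
    rw [Mdl.Xinv, Mdl.Yinv]
    ext
    · simp [Mdl.X, Mdl.Y, Mdl.Z]
    · simp [Mdl.X, Mdl.Y, Mdl.Z]
    · simp [Mdl.X, Mdl.Y, Mdl.Z, Mdl.mul_c, tw, map_neg, map_one, map_zero]
  intro r hr
  simp only [hrels, Set.mem_insert_iff, Set.mem_singleton_iff] at hr
  rcases hr with rfl | rfl | rfl | rfl | rfl | rfl <;>
    simp only [map_mul, map_inv, map_pow, FreeGroup.lift_apply_of, fgen0, fgen1, fgen2]
  · rw [hYXYX, inv_mul_cancel]
  · rw [Mdl.X_pow]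
    have : ((2 ^ n : ℕ) : ZMod (4 * N)) = 0 :=
      (ZMod.natCast_eq_zero_iff _ _).mpr (h4N ▸ dvd_refl _)
    rw [this]; rfl
  · rw [Mdl.Y_pow]
    have : ((2 ^ m : ℕ) : ZMod (4 * M)) = 0 :=
      (ZMod.natCast_eq_zero_iff _ _).mpr (h4M ▸ dvd_refl _)
    rw [this]; rfl
  · rw [Mdl.Z_pow]
    have : ((4 : ℕ) : ZMod 4) = 0 := (ZMod.natCast_eq_zero_iff _ _).mpr dvd_rfl
    rw [this]; rfl
  · rw [Mdl.Xinv]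
    ext <;> (try simp [Mdl.X, Mdl.Z, Mdl.mul_c, tw, map_neg, map_one, map_zero]) <;> try decide
  · rw [Mdl.Yinv, Mdl.Zinv]
    ext <;> (try simp [Mdl.Y, Mdl.Z, Mdl.mul_c, tw, map_neg, map_one, map_zero]) <;> try decide

/-! ### Main theorem -/

open scoped commutatorElement

/-- For all integers `n, m` with `n > m > 2`, the groups `G` and `H`
are not isomorphic. -/
theorem statement_1 (n m : ℕ) (hm : 2 < m) (hmn : m < n) :
    IsEmpty (GG n m ≃* HH n m) := by
  constructor
  intro e
  have hn2 : 2 + (n - 2) = n := by omega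
  have hm2 : 2 + (m - 2) = m := by omega
  set N := 2 ^ (n - 2) with hN
  set M := 2 ^ (m - 2) with hM
  have h4N : 4 * N = 2 ^ n := by
    rw [hN, show (4 : ℕ) = 2 ^ 2 from rfl, ← pow_add, hn2]
  have h4M : 4 * M = 2 ^ m := by
    rw [hM, show (4 : ℕ) = 2 ^ 2 from rfl, ← pow_add, hm2]
  haveI : NeZero (4 * N) := ⟨by positivity⟩
  haveI : NeZero (4 * M) := ⟨by positivity⟩
  have hcheck := hrels_check n m N M h4N h4M
  set φ : HH n m →* Mdl N M := PresentedGroup.toGroup hcheck with hφ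
  set ψ : GG n m →* Mdl N M := φ.comp e.toMonoidHom with hψ
  -- `φ` is surjective
  have hφX : φ (ha n m) = Mdl.X := PresentedGroup.toGroup.of hcheck
  have hφY : φ (hb n m) = Mdl.Y := PresentedGroup.toGroup.of hcheck
  have hφZ : φ (hc n m) = Mdl.Z := PresentedGroup.toGroup.of hcheck
  have hφsurj : Function.Surjective φ := by
    intro g
    refine ⟨(ha n m) ^ g.a.val * (hb n m) ^ g.b.val * (hc n m) ^ g.c.val, ?_⟩
    rw [map_mul, map_mul, map_pow, map_pow, map_pow, hφX, hφY, hφZ, ← Mdl.decomp]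
  have hψsurj : Function.Surjective ψ := hφsurj.comp e.surjective
  -- relations in `GG n m`
  have key : ∀ r ∈ grels n m, (PresentedGroup.mk (grels n m)) r = 1 := fun r hr =>
    (QuotientGroup.eq_one_iff _).mpr (Subgroup.subset_normalClosure hr)
  have R1 : gz n m = (gy n m)⁻¹ * (gx n m)⁻¹ * gy n m * gx n m := by
    have h := key _ (Set.mem_insert _ _)
    simp only [map_mul, map_inv] at h
    exact inv_mul_eq_one.mp h
  have R2 : (gy n m) ^ (2 ^ m) = 1 := by
    have h := key (FreeGroup.of 1 ^ (2 ^ m)) (by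
      simp only [grels, Set.mem_insert_iff, Set.mem_singleton_iff]
      tauto)
    rwa [map_pow] at h
  have R3 : (gy n m)⁻¹ * gz n m * gy n m = (gz n m)⁻¹ := by
    have h := key ((FreeGroup.of 1)⁻¹ * FreeGroup.of 2 * FreeGroup.of 1 * FreeGroup.of 2) (by
      simp only [grels, Set.mem_insert_iff, Set.mem_singleton_iff]
      tauto)
    simp only [map_mul, map_inv] at h
    exact mul_eq_one_iff_eq_inv.mp h
  set A := ψ (gx n m) with hA
  set B := ψ (gy n m) with hB
  set C := ψ (gz n m) with hC
  rcases zmod2_cases (par N B.a) with hp | hp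
  · -- `B.a` even : `C` is central enough, and we land in the Heisenberg group
    have hCBA : C = B⁻¹ * A⁻¹ * B * A := by
      rw [hC, R1]
      simp only [map_mul, map_inv, hA, hB]
    have hCa : C.a = 0 := by
      rw [hCBA]
      simp only [Mdl.mul_a, Mdl.inv_a]
      ring
    have hCb : C.b = 0 := by
      rw [hCBA]
      simp only [Mdl.mul_b, Mdl.inv_b]
      ring
    have hcomm : B * C = C * B := by
      ext
      · simp [add_comm]
      · simp [add_comm]
      · rw [Mdl.mul_c, Mdl.mul_c, hCa, map_zero, tw0, hp, tw0, add_comm]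
    have hCC : C * C = 1 := by
      have h3 : B⁻¹ * C * B = C⁻¹ := by
        have := congrArg ψ R3
        simpa only [map_mul, map_inv, ← hB, ← hC] using this
      have h4 : C = C⁻¹ := by
        rw [← h3, mul_assoc, ← hcomm, ← mul_assoc, inv_mul_cancel, one_mul]
      nth_rewrite 2 [h4]
      exact mul_inv_cancel C
    have hCc : C.c + C.c = 0 := by
      have h5 := congrArg Mdl.c hCC
      rwa [Mdl.mul_c, hCa, map_zero, tw0, Mdl.one_c] at h5
    set θ : GG n m →* Heis := (Mdl.nu N M).comp ψ with hθ
    have hθsurj : Function.Surjective θ := (Mdl.nu_surjective N M).comp hψsurj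
    have hθz : θ (gz n m) = 1 := by
      show Mdl.nu N M C = 1
      ext
      · show par N C.a = _
        rw [hCa, map_zero]; rfl
      · show ZMod.castHom _ _ C.b = _
        rw [hCb, map_zero]; rfl
      · show ctwo C.c = _
        have : ∀ ζ : ZMod 4, ζ + ζ = 0 → ctwo ζ = 0 := by decide
        rw [this _ hCc]; rfl
    have hθxy : Commute (θ (gx n m)) (θ (gy n m)) := by
      have h1 : θ (gz n m)
          = (θ (gy n m))⁻¹ * (θ (gx n m))⁻¹ * θ (gy n m) * θ (gx n m) := by
        rw [R1]; simp only [map_mul, map_inv]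
      rw [hθz] at h1
      have h2 : ⁅(θ (gy n m))⁻¹, (θ (gx n m))⁻¹⁆ = 1 := by
        rw [commutatorElement_def, inv_inv, inv_inv]
        exact h1.symm
      have h3 := commutatorElement_eq_one_iff_commute.mp h2
      have h4 := (h3.inv_left.inv_right).symm
      rwa [inv_inv, inv_inv] at h4
    have hbase : ∀ i j : Fin 3,
        Commute (θ (PresentedGroup.of (rels := grels n m) i))
          (θ (PresentedGroup.of (rels := grels n m) j)) := by
      have hzc : ∀ w : Heis, Commute w (θ (gz n m)) := fun w => by
        rw [hθz]; exact Commute.one_right w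
      have hzc' : ∀ w : Heis, Commute (θ (gz n m)) w := fun w => by
        rw [hθz]; exact Commute.one_left w
      intro i j
      fin_cases i <;> fin_cases j <;>
        first
          | exact Commute.refl _
          | exact hθxy
          | exact hθxy.symm
          | exact hzc _
          | exact hzc' _
    have hall : ∀ u v : Heis, Commute u v := by
      have hmem : ∀ u : Heis,
          u ∈ Subgroup.closure (⇑θ '' Set.range (PresentedGroup.of (rels := grels n m))) := by
        intro u
        rw [← MonoidHom.map_closure, PresentedGroup.closure_range_of, ← MonoidHom.range_eq_map]
        exact MonoidHom.mem_range.mpr (hθsurj u)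
      intro u v
      refine Subgroup.closure_induction₂ (p := fun x y _ _ => Commute x y)
        ?_ (fun x _ => Commute.one_left x) (fun x _ => Commute.one_right x)
        (fun x y z _ _ _ h1 h2 => h1.mul_left h2) (fun y z x _ _ _ h1 h2 => h1.mul_right h2)
        (fun x y _ _ h => h.inv_left) (fun x y _ _ h => h.inv_right) (hmem u) (hmem v)
      rintro x y ⟨_, ⟨i, rfl⟩, rfl⟩ ⟨_, ⟨j, rfl⟩, rfl⟩
      exact hbase i j
    have hne : (⟨1, 0, 0⟩ : Heis) * ⟨0, 1, 0⟩ ≠ (⟨0, 1, 0⟩ : Heis) * ⟨1, 0, 0⟩ := by decide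
    exact hne (hall ⟨1, 0, 0⟩ ⟨0, 1, 0⟩).eq
  · -- `B.a` odd : contradiction with `m < n`
    have hpow : B ^ (2 ^ m) = 1 := by
      rw [hB, ← map_pow, R2, map_one]
    have h1 : ((2 ^ m : ℕ) : ZMod (4 * N)) * B.a = 0 := by
      have h := congrArg Mdl.a hpow
      rwa [Mdl.pow_fst, Mdl.one_a] at h
    set t0 := B.a.val with ht0
    have hBa : ((t0 : ℕ) : ZMod (4 * N)) = B.a := by
      rw [ht0, ZMod.natCast_val, ZMod.cast_id]
    have h2 : ((2 ^ m * t0 : ℕ) : ZMod (4 * N)) = 0 := by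
      rw [Nat.cast_mul, hBa]; exact h1
    have h3 : 4 * N ∣ 2 ^ m * t0 := (ZMod.natCast_eq_zero_iff _ _).mp h2
    rw [h4N] at h3
    have hodd : ¬ 2 ∣ t0 := by
      intro hdvd
      have h7 : ((t0 : ℕ) : ZMod 2) = 0 := (ZMod.natCast_eq_zero_iff _ _).mpr hdvd
      rw [← hBa, map_natCast, h7] at hp
      exact absurd hp (by decide)
    have hco : Nat.Coprime (2 ^ n) t0 :=
      Nat.Coprime.pow_left _ ((Nat.Prime.coprime_iff_not_dvd Nat.prime_two).mpr hodd)
    have h5 : 2 ^ n ∣ 2 ^ m := hco.dvd_of_dvd_mul_right h3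
    have h6 : n ≤ m := (Nat.pow_dvd_pow_iff_le_right one_lt_two).mp h5
    omega

end MIP
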